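/- Two elements of a free group commute if and only if they are both powers of a common element. -/

import Mathlib

/-- In a free group, if the generators `of a` and `of b` commute then `a = b`. -/
lemma FreeGroup.of_eq_of_comm {S : Type*} {a b : S} (h : FreeGroup.of a * FreeGroup.of b = FreeGroup.of b * FreeGroup.of a) : a = b := by
  by_contra hab
  classical
  let f : S → Equiv.Perm (Fin 3) := fun s => if s = a then Equiv.swap 0 1 else Equiv.swap 1 2
  have := congrArg (FreeGroup.lift f) h
  rw [_root_.map_mul, _root_.map_mul, FreeGroup.lift_apply_of, FreeGroup.lift_apply_of] at this
  have hfa : f a = Equiv.swap 0 1 := by simp [f]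
  have hfb : f b = Equiv.swap 1 2 := by
    have : b ≠ a := fun hba => hab hba.symm
    simp [f, this]
  rw [hfa, hfb] at this
  exact absurd this (by decide)

/-- Every element of a free group over a subsingleton type is an integer power of a fixed element. -/
lemma FreeGroup.exists_zpow_of_subsingleton {S : Type*} [Subsingleton S] :
    ∃ z : FreeGroup S, ∀ g : FreeGroup S, ∃ n : ℤ, g = z ^ n := by
  by_cases hne : Nonempty S
  · obtain ⟨i⟩ := hne
    refine ⟨FreeGroup.of i, fun g => ?_⟩
    induction g using FreeGroup.induction_on with
    | C1 => exact ⟨0, by simp⟩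
    | of x => exact ⟨1, by rw [Subsingleton.elim x i, zpow_one]⟩
    | inv_of x ih => obtain ⟨n, hn⟩ := ih; exact ⟨-n, by rw [hn, zpow_neg]⟩
    | mul x y ihx ihy =>
        obtain ⟨n, hn⟩ := ihx; obtain ⟨m, hm⟩ := ihy
        exact ⟨n + m, by rw [hn, hm, zpow_add]⟩
  · refine ⟨1, fun g => ⟨0, ?_⟩⟩
    induction g using FreeGroup.induction_on with
    | C1 => simp
    | of x => exact absurd ⟨x⟩ hne
    | inv_of x ih => rw [ih]; simp
    | mul x y ihx ihy => rw [ihx, ihy]; simp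

/-- A commutative free group is "cyclic": all its elements are powers of a common element. -/
lemma IsFreeGroup.exists_zpow {G : Type*} [Group G] [IsFreeGroup G]
    (hc : ∀ g h : G, g * h = h * g) : ∃ z : G, ∀ g : G, ∃ n : ℤ, g = z ^ n := by
  have hsub : Subsingleton (IsFreeGroup.Generators G) := by
    constructor
    intro a b
    apply FreeGroup.of_eq_of_comm (a := a) (b := b)
    have e := IsFreeGroup.toFreeGroup (G := G)
    have := hc (e.symm (FreeGroup.of a)) (e.symm (FreeGroup.of b))
    have := congrArg e this
    simpa using this
  obtain ⟨z, hz⟩ := FreeGroup.exists_zpow_of_subsingleton (S := IsFreeGroup.Generators G)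
  let e := IsFreeGroup.toFreeGroup (G := G)
  refine ⟨e.symm z, fun g => ?_⟩
  obtain ⟨n, hn⟩ := hz (e g)
  exact ⟨n, by have := congrArg e.symm hn; simpa using this⟩

theorem free_group_commute_iff_common_power {S : Type*} (x y : FreeGroup S) :
    x * y = y * x ↔ ∃ (z : FreeGroup S) (m n : ℤ), x = z ^ m ∧ y = z ^ n := by
  constructor
  · intro h
    set H : Subgroup (FreeGroup S) := Subgroup.closure {x, y} with hH
    have hxH : x ∈ H := Subgroup.subset_closure (by simp)
    have hyH : y ∈ H := Subgroup.subset_closure (by simp)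
    -- H is commutative
    have hcomm : ∀ g ∈ H, ∀ h' ∈ H, g * h' = h' * g := by
      have step1 : H ≤ Subgroup.centralizer {x, y} := by
        rw [hH, Subgroup.closure_le]
        rintro g (rfl | rfl) <;>
          · intro h' hh'
            rcases hh' with rfl | rfl <;> simp [h]
      intro g hg h' hh'
      have hx' : h' * x = x * h' := (step1 hh' x (by simp)).symm
      have hy' : h' * y = y * h' := (step1 hh' y (by simp)).symm
      have : g ∈ Subgroup.centralizer {h'} := by
        have : ({x, y} : Set (FreeGroup S)) ⊆ Subgroup.centralizer {h'} := by
          rintro g' (rfl | rfl) <;> intro k hk <;> rcases hk with rfl <;> assumption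
        exact (Subgroup.closure_le _).2 this hg
      exact (this h' rfl).symm
    have hcomm' : ∀ g h' : H, g * h' = h' * g := by
      rintro ⟨g, hg⟩ ⟨h', hh'⟩
      ext
      exact hcomm g hg h' hh'
    obtain ⟨z, hz⟩ := IsFreeGroup.exists_zpow (G := H) hcomm'
    obtain ⟨m, hm⟩ := hz ⟨x, hxH⟩
    obtain ⟨n, hn⟩ := hz ⟨y, hyH⟩
    refine ⟨(z : FreeGroup S), m, n, ?_, ?_⟩
    · have := congrArg (Subtype.val) hm; simpa using this
    · have := congrArg (Subtype.val) hn; simpa using this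
  · rintro ⟨z, m, n, rfl, rfl⟩
    exact zpow_mul_comm z m n
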